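/- Let K be an algebraically closed field, let B_3(K) be the group of invertible lower triangular 3×3 matrices over K acting by conjugation on the space n_3(K) of strictly lower triangular 3×3 matrices. Then every element of n_3(K) is B_3(K)-conjugate to exactly one of the five matrices 0, E_{21}, E_{31}, E_{32}, E_{21}+E_{32}, where E_{ij} denotes the matrix unit with entry 1 in position (i,j) and 0 elsewhere. -/

import Mathlib

open Matrix

/-- The `3×3` matrix unit `E_{ij}` (with `0`-indexed positions: `E_{21} = Eu 1 0`, etc.). -/
def Eu {K : Type*} [Field K] (i j : Fin 3) : Matrix (Fin 3) (Fin 3) K :=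
  Matrix.single i j 1

/-- A `3×3` matrix is strictly lower triangular. -/
def StrictLower {K : Type*} [Field K] (X : Matrix (Fin 3) (Fin 3) K) : Prop :=
  ∀ i j : Fin 3, i ≤ j → X i j = 0

section Aux

variable {K : Type*} [Field K]

lemma conj_eq_iff (g : GL (Fin 3) K) (X r : Matrix (Fin 3) (Fin 3) K) :
    (g : Matrix (Fin 3) (Fin 3) K) * X * ((g⁻¹ : GL (Fin 3) K) : Matrix (Fin 3) (Fin 3) K) = r ↔
      (g : Matrix (Fin 3) (Fin 3) K) * X = r * (g : Matrix (Fin 3) (Fin 3) K) := by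
  have h1 : ((g⁻¹ : GL (Fin 3) K) : Matrix (Fin 3) (Fin 3) K) * (g : Matrix (Fin 3) (Fin 3) K)
      = 1 := by
    rw [← Units.val_mul, inv_mul_cancel]; rfl
  have h2 : (g : Matrix (Fin 3) (Fin 3) K) * ((g⁻¹ : GL (Fin 3) K) : Matrix (Fin 3) (Fin 3) K)
      = 1 := by
    rw [← Units.val_mul, mul_inv_cancel]; rfl
  constructor
  · intro h
    rw [← h, mul_assoc, mul_assoc, h1, mul_one]
  · intro h
    rw [h, mul_assoc, h2, mul_one]

/-- Two of the five canonical representatives linked by a lower-triangular conjugation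
are equal. -/
lemma key_unique (r₁ r₂ : Matrix (Fin 3) (Fin 3) K)
    (h₁ : r₁ ∈ [(0 : Matrix (Fin 3) (Fin 3) K), Eu 1 0, Eu 2 0, Eu 2 1, Eu 1 0 + Eu 2 1])
    (h₂ : r₂ ∈ [(0 : Matrix (Fin 3) (Fin 3) K), Eu 1 0, Eu 2 0, Eu 2 1, Eu 1 0 + Eu 2 1])
    (g : GL (Fin 3) K)
    (hg : ∀ i j : Fin 3, i < j → (g : Matrix (Fin 3) (Fin 3) K) i j = 0)
    (h : (g : Matrix (Fin 3) (Fin 3) K) * r₁ = r₂ * (g : Matrix (Fin 3) (Fin 3) K)) :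
    r₁ = r₂ := by
  set G : Matrix (Fin 3) (Fin 3) K := (g : Matrix (Fin 3) (Fin 3) K) with hG
  have hg01 : G 0 1 = 0 := hg 0 1 (by decide)
  have hg02 : G 0 2 = 0 := hg 0 2 (by decide)
  have hg12 : G 1 2 = 0 := hg 1 2 (by decide)
  have hdet : IsUnit G.det := (Matrix.isUnit_iff_isUnit_det _).mp g.isUnit
  have hdet' : G.det = G 0 0 * G 1 1 * G 2 2 := by
    rw [Matrix.det_fin_three]; rw [hg01, hg02, hg12]; ring
  have hdet0 : G 0 0 * G 1 1 * G 2 2 ≠ 0 := by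
    rw [← hdet']; exact hdet.ne_zero
  have h00 : G 0 0 ≠ 0 := fun hx => hdet0 (by rw [hx]; ring)
  have h11 : G 1 1 ≠ 0 := fun hx => hdet0 (by rw [hx]; ring)
  have h22 : G 2 2 ≠ 0 := fun hx => hdet0 (by rw [hx]; ring)
  have e10 := congrFun (congrFun h 1) 0
  have e21 := congrFun (congrFun h 2) 1
  have e20 := congrFun (congrFun h 2) 0
  simp only [Matrix.mul_apply, Fin.sum_univ_three, ← hG] at e10 e21 e20
  fin_cases h₁ <;> fin_cases h₂ <;>
    first
      | rfl
      | (exfalso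
         simp [Eu, Matrix.single] at e10 e21 e20 <;> skip
         first
           | exact h00 e10.symm | exact h00 e10 | exact h11 e10 | exact h11 e10.symm
           | exact h11 e21 | exact h11 e21.symm | exact h22 e21 | exact h22 e21.symm
           | exact h00 e20.symm | exact h00 e20 | exact h22 e20 | exact h22 e20.symm
           | exact h00 (by linear_combination e20) | exact h00 (by linear_combination -e20)
           | exact h11 (by linear_combination e21) | exact h11 (by linear_combination -e21)
           | exact h22 (by linear_combination e21) | exact h22 (by linear_combination -e21)
           | exact h00 (by linear_combination e10) | exact h00 (by linear_combination -e10)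
           | exact h11 (by linear_combination e10) | exact h11 (by linear_combination -e10)
           | exact h22 (by linear_combination e20) | exact h22 (by linear_combination -e20))

lemma exists_pack (N r A B : Matrix (Fin 3) (Fin 3) K)
    (hAB : A * B = 1) (hBA : B * A = 1)
    (hAlow : ∀ i j : Fin 3, i < j → A i j = 0)
    (hBlow : ∀ i j : Fin 3, i < j → B i j = 0)
    (hmul : A * N = r * A) :
    ∃ g : GL (Fin 3) K,
      (∀ i j : Fin 3, i < j → (g : Matrix (Fin 3) (Fin 3) K) i j = 0) ∧
      (∀ i j : Fin 3, i < j →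
        ((g⁻¹ : GL (Fin 3) K) : Matrix (Fin 3) (Fin 3) K) i j = 0) ∧
      (g : Matrix (Fin 3) (Fin 3) K) * N = r * (g : Matrix (Fin 3) (Fin 3) K) :=
  ⟨⟨A, B, hAB, hBA⟩, hAlow, hBlow, hmul⟩

end Aux

set_option maxHeartbeats 1000000 in
set_option synthInstance.maxHeartbeats 400000 in
/-- Every strictly lower triangular `3×3` matrix is conjugate, under the group of
invertible lower triangular matrices, to exactly one of
`0`, `E_{21}`, `E_{31}`, `E_{32}`, `E_{21}+E_{32}`. -/
theorem borel_orbits_of_strictly_lower {K : Type*} [Field K] [IsAlgClosed K]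
    (N : Matrix (Fin 3) (Fin 3) K) (hN : StrictLower N) :
    ∃! r : Matrix (Fin 3) (Fin 3) K,
      r ∈ [(0 : Matrix (Fin 3) (Fin 3) K), Eu 1 0, Eu 2 0, Eu 2 1, Eu 1 0 + Eu 2 1] ∧
      ∃ g : GL (Fin 3) K,
        (∀ i j : Fin 3, i < j → (g : Matrix (Fin 3) (Fin 3) K) i j = 0) ∧
        (g : Matrix (Fin 3) (Fin 3) K) * N * ((g⁻¹ : GL (Fin 3) K) : Matrix (Fin 3) (Fin 3) K)
          = r := by
  have hN00 : N 0 0 = 0 := hN 0 0 le_rfl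
  have hN01 : N 0 1 = 0 := hN 0 1 (by decide)
  have hN02 : N 0 2 = 0 := hN 0 2 (by decide)
  have hN11 : N 1 1 = 0 := hN 1 1 le_rfl
  have hN12 : N 1 2 = 0 := hN 1 2 (by decide)
  have hN22 : N 2 2 = 0 := hN 2 2 le_rfl
  -- Existence with an explicit lower-triangular inverse
  have hex : ∃ r ∈ [(0 : Matrix (Fin 3) (Fin 3) K), Eu 1 0, Eu 2 0, Eu 2 1, Eu 1 0 + Eu 2 1],
      ∃ g : GL (Fin 3) K,
        (∀ i j : Fin 3, i < j → (g : Matrix (Fin 3) (Fin 3) K) i j = 0) ∧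
        (∀ i j : Fin 3, i < j →
          ((g⁻¹ : GL (Fin 3) K) : Matrix (Fin 3) (Fin 3) K) i j = 0) ∧
        (g : Matrix (Fin 3) (Fin 3) K) * N = r * (g : Matrix (Fin 3) (Fin 3) K) := by
    by_cases hc : N 2 1 = 0
    · by_cases hA : N 1 0 = 0
      · by_cases hb : N 2 0 = 0
        · -- N = 0
          refine ⟨0, by simp, exists_pack N 0 1 1 (by simp) (by simp) ?_ ?_ ?_⟩
          · intro i j hij; exact Matrix.one_apply_ne (ne_of_lt hij)
          · intro i j hij; exact Matrix.one_apply_ne (ne_of_lt hij)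
          · have : N = 0 := by
              ext i j; fin_cases i <;> fin_cases j <;> assumption
            rw [this]; simp
        · -- r = E31
          refine ⟨Eu 2 0, by simp,
            exists_pack N (Eu 2 0) !![N 2 0,0,0;0,1,0;0,0,1] !![(N 2 0)⁻¹,0,0;0,1,0;0,0,1]
              ?_ ?_ ?_ ?_ ?_⟩
          · ext i j
            fin_cases i <;> fin_cases j <;>
              simp [Matrix.mul_apply, Fin.sum_univ_three, Matrix.one_apply, Matrix.vecHead,
                Matrix.vecTail, hb]
          · ext i j
            fin_cases i <;> fin_cases j <;>
              simp [Matrix.mul_apply, Fin.sum_univ_three, Matrix.one_apply, Matrix.vecHead,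
                Matrix.vecTail, hb]
          · intro i j hij
            fin_cases i <;> fin_cases j <;>
              first | exact absurd hij (by decide) | simp [Matrix.vecHead, Matrix.vecTail]
          · intro i j hij
            fin_cases i <;> fin_cases j <;>
              first | exact absurd hij (by decide) | simp [Matrix.vecHead, Matrix.vecTail]
          · ext i j
            fin_cases i <;> fin_cases j <;>
              simp [Matrix.mul_apply, Fin.sum_univ_three, Eu, Matrix.single,
                Matrix.vecHead, Matrix.vecTail, hN00, hN01, hN02, hN11, hN12, hN22, hA, hc]
      · -- a ≠ 0, c = 0 : r = E21
        refine ⟨Eu 1 0, by simp,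
          exists_pack N (Eu 1 0) !![N 1 0,0,0;0,1,0;0,-(N 2 0/N 1 0),1]
            !![(N 1 0)⁻¹,0,0;0,1,0;0,N 2 0/N 1 0,1] ?_ ?_ ?_ ?_ ?_⟩
        · ext i j
          fin_cases i <;> fin_cases j <;>
            simp [Matrix.mul_apply, Fin.sum_univ_three, Matrix.one_apply, Matrix.vecHead,
              Matrix.vecTail, hA]
        · ext i j
          fin_cases i <;> fin_cases j <;>
            simp [Matrix.mul_apply, Fin.sum_univ_three, Matrix.one_apply, Matrix.vecHead,
              Matrix.vecTail, hA]
        · intro i j hij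
          fin_cases i <;> fin_cases j <;>
            first | exact absurd hij (by decide) | simp [Matrix.vecHead, Matrix.vecTail]
        · intro i j hij
          fin_cases i <;> fin_cases j <;>
            first | exact absurd hij (by decide) | simp [Matrix.vecHead, Matrix.vecTail]
        · ext i j
          fin_cases i <;> fin_cases j <;>
            simp [Matrix.mul_apply, Fin.sum_univ_three, Eu, Matrix.single,
              Matrix.vecHead, Matrix.vecTail, hN00, hN01, hN02, hN11, hN12, hN22, hc] <;>
            field_simp <;> ring
    · by_cases hA : N 1 0 = 0
      · -- a = 0, c ≠ 0 : r = E32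
        refine ⟨Eu 2 1, by simp,
          exists_pack N (Eu 2 1) !![1,0,0;N 2 0,N 2 1,0;0,0,1]
            !![1,0,0;-(N 2 0/N 2 1),(N 2 1)⁻¹,0;0,0,1] ?_ ?_ ?_ ?_ ?_⟩
        · ext i j
          fin_cases i <;> fin_cases j <;>
            simp [Matrix.mul_apply, Fin.sum_univ_three, Matrix.one_apply, Matrix.vecHead,
              Matrix.vecTail, hc] <;> field_simp <;> ring
        · ext i j
          fin_cases i <;> fin_cases j <;>
            simp [Matrix.mul_apply, Fin.sum_univ_three, Matrix.one_apply, Matrix.vecHead,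
              Matrix.vecTail, hc] <;> field_simp <;> ring
        · intro i j hij
          fin_cases i <;> fin_cases j <;>
            first | exact absurd hij (by decide) | simp [Matrix.vecHead, Matrix.vecTail]
        · intro i j hij
          fin_cases i <;> fin_cases j <;>
            first | exact absurd hij (by decide) | simp [Matrix.vecHead, Matrix.vecTail]
        · ext i j
          fin_cases i <;> fin_cases j <;>
            simp [Matrix.mul_apply, Fin.sum_univ_three, Eu, Matrix.single,
              Matrix.vecHead, Matrix.vecTail, hN00, hN01, hN02, hN11, hN12, hN22, hA]
      · -- a ≠ 0, c ≠ 0 : r = E21 + E32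
        refine ⟨Eu 1 0 + Eu 2 1, by simp,
          exists_pack N (Eu 1 0 + Eu 2 1) !![N 1 0 * N 2 1,0,0;N 2 0,N 2 1,0;0,0,1]
            !![(N 1 0 * N 2 1)⁻¹,0,0;-(N 2 0/(N 1 0 * N 2 1 * N 2 1)),(N 2 1)⁻¹,0;0,0,1]
            ?_ ?_ ?_ ?_ ?_⟩
        · ext i j
          fin_cases i <;> fin_cases j <;>
            simp [Matrix.mul_apply, Fin.sum_univ_three, Matrix.one_apply, Matrix.vecHead,
              Matrix.vecTail, hc, hA] <;> field_simp <;> ring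
        · ext i j
          fin_cases i <;> fin_cases j <;>
            simp [Matrix.mul_apply, Fin.sum_univ_three, Matrix.one_apply, Matrix.vecHead,
              Matrix.vecTail, hc, hA] <;> field_simp <;> ring
        · intro i j hij
          fin_cases i <;> fin_cases j <;>
            first | exact absurd hij (by decide) | simp [Matrix.vecHead, Matrix.vecTail]
        · intro i j hij
          fin_cases i <;> fin_cases j <;>
            first | exact absurd hij (by decide) | simp [Matrix.vecHead, Matrix.vecTail]
        · ext i j
          fin_cases i <;> fin_cases j <;>
            simp [Matrix.mul_apply, Fin.sum_univ_three, Eu, Matrix.single,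
              Matrix.vecHead, Matrix.vecTail, hN00, hN01, hN02, hN11, hN12, hN22] <;>
            ring
  obtain ⟨r₀, hr₀mem, g₀, hg₀low, hg₀invlow, hconj₀⟩ := hex
  refine ⟨r₀, ⟨hr₀mem, g₀, hg₀low, (conj_eq_iff g₀ N r₀).mpr hconj₀⟩, ?_⟩
  rintro y ⟨hymem, gy, hylow, hyconj⟩
  have hy' : (gy : Matrix (Fin 3) (Fin 3) K) * N = y * (gy : Matrix (Fin 3) (Fin 3) K) :=
    (conj_eq_iff gy N y).mp hyconj
  -- h := gy * g₀⁻¹ conjugates r₀ to y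
  set h : GL (Fin 3) K := gy * g₀⁻¹ with hh
  have hinv : (g₀ : Matrix (Fin 3) (Fin 3) K) * ((g₀⁻¹ : GL (Fin 3) K) : Matrix (Fin 3) (Fin 3) K)
      = 1 := by rw [← Units.val_mul, mul_inv_cancel]; rfl
  have hinv' : ((g₀⁻¹ : GL (Fin 3) K) : Matrix (Fin 3) (Fin 3) K) * (g₀ : Matrix (Fin 3) (Fin 3) K)
      = 1 := by rw [← Units.val_mul, inv_mul_cancel]; rfl
  have hcomm : ((g₀⁻¹ : GL (Fin 3) K) : Matrix (Fin 3) (Fin 3) K) * r₀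
      = N * ((g₀⁻¹ : GL (Fin 3) K) : Matrix (Fin 3) (Fin 3) K) := by
    have := congrArg (fun X => ((g₀⁻¹ : GL (Fin 3) K) : Matrix (Fin 3) (Fin 3) K) * X *
      ((g₀⁻¹ : GL (Fin 3) K) : Matrix (Fin 3) (Fin 3) K)) hconj₀
    beta_reduce at this
    calc ((g₀⁻¹ : GL (Fin 3) K) : Matrix (Fin 3) (Fin 3) K) * r₀
        = ((g₀⁻¹ : GL (Fin 3) K) : Matrix (Fin 3) (Fin 3) K) * r₀ *
          ((g₀ : Matrix (Fin 3) (Fin 3) K) *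
            ((g₀⁻¹ : GL (Fin 3) K) : Matrix (Fin 3) (Fin 3) K)) := by rw [hinv, mul_one]
      _ = ((g₀⁻¹ : GL (Fin 3) K) : Matrix (Fin 3) (Fin 3) K) * (r₀ * (g₀ : Matrix (Fin 3) (Fin 3) K)) *
          ((g₀⁻¹ : GL (Fin 3) K) : Matrix (Fin 3) (Fin 3) K) := by
            simp only [mul_assoc]
      _ = ((g₀⁻¹ : GL (Fin 3) K) : Matrix (Fin 3) (Fin 3) K) * ((g₀ : Matrix (Fin 3) (Fin 3) K) * N) *
          ((g₀⁻¹ : GL (Fin 3) K) : Matrix (Fin 3) (Fin 3) K) := by rw [← hconj₀]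
      _ = N * ((g₀⁻¹ : GL (Fin 3) K) : Matrix (Fin 3) (Fin 3) K) := by
            rw [← mul_assoc, hinv', one_mul]
  have hmain : (h : Matrix (Fin 3) (Fin 3) K) * r₀ = y * (h : Matrix (Fin 3) (Fin 3) K) := by
    have hval : (h : Matrix (Fin 3) (Fin 3) K)
        = (gy : Matrix (Fin 3) (Fin 3) K) * ((g₀⁻¹ : GL (Fin 3) K) : Matrix (Fin 3) (Fin 3) K) := by
      rw [hh]; rfl
    rw [hval, mul_assoc, hcomm, ← mul_assoc, hy', mul_assoc]
  have hhlow : ∀ i j : Fin 3, i < j → (h : Matrix (Fin 3) (Fin 3) K) i j = 0 := by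
    have hval : (h : Matrix (Fin 3) (Fin 3) K)
        = (gy : Matrix (Fin 3) (Fin 3) K) * ((g₀⁻¹ : GL (Fin 3) K) : Matrix (Fin 3) (Fin 3) K) := by
      rw [hh]; rfl
    intro i j hij
    rw [hval, Matrix.mul_apply]
    apply Finset.sum_eq_zero
    intro k _
    rcases le_or_gt k i with hk | hk
    · rw [hg₀invlow k j (lt_of_le_of_lt hk hij), mul_zero]
    · rw [hylow i k hk, zero_mul]
  exact (key_unique r₀ y hr₀mem hymem h hhlow hmain).symm
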